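/- Let J be a finite symplectic F_2-vector space and (S, Q) a symplectic torsor over J. The map t ↦ q_t, where q_t(j) = Q(t) + Q(j+t), is a J-equivariant bijection from S to Quad(J): it satisfies q_{j+t} = j + q_t (i.e. q_{j+t}(x) = q_t(x) + j·x) for all j ∈ J, t ∈ S, and it is injective, hence bijective since |S| = |J| = |Quad(J)|. -/

import Mathlib

/-- `B` is a symplectic form on the `𝔽₂`-vector space `J`: bilinear, alternating and
non-degenerate. -/
def IsSymplectic {J : Type*} [AddCommGroup J] [Module (ZMod 2) J]
    (B : J → J → ZMod 2) : Prop :=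
  (∀ x y z, B (x + y) z = B x z + B y z) ∧
  (∀ x y z, B x (y + z) = B x y + B x z) ∧
  (∀ x, B x x = 0) ∧
  (∀ x, (∀ y, B x y = 0) → x = 0)

/-- The set of quadratic refinements of the form `B`. -/
def QuadSet {J : Type*} [AddCommGroup J] (B : J → J → ZMod 2) : Set (J → ZMod 2) :=
  {q | ∀ x y, q x + q y + q (x + y) = B x y}

/-- The Arf invariant of `q : J → ℤ/2`: it is `0` iff `q` takes the value `0` on more than
half of the elements of `J`. -/
noncomputable def ArfInv {J : Type*} [Finite J] (q : J → ZMod 2) : ZMod 2 :=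
  if Nat.card J < 2 * Nat.card {x : J // q x = 0} then 0 else 1

/-- Let `(S, Q)` be a symplectic torsor over a finite symplectic
`𝔽₂`-vector space `(J, B)`. The map `t ↦ q_t`, where `q_t(j) = Q(t) + Q(j + t)`, is a
`J`-equivariant bijection from `S` to the set of quadratic refinements of `B`:
it satisfies `q_{j+t} = j + q_t`, is injective, and is surjective onto `Quad(J)`. -/
theorem stmt_19 {J S : Type*} [AddCommGroup J] [Module (ZMod 2) J] [Finite J]
    [Nonempty S]
    (B : J → J → ZMod 2) (hB : IsSymplectic B)
    (act : J → S → S)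
    (hact0 : ∀ s, act 0 s = s)
    (hactadd : ∀ j k s, act (j + k) s = act j (act k s))
    (htrans : ∀ s t : S, ∃! j : J, act j s = t)
    (Q : S → ZMod 2)
    (hQ : ∀ (s : S) (j₁ j₂ : J),
      Q s + Q (act j₁ s) + Q (act j₂ s) + Q (act (j₁ + j₂) s) = B j₁ j₂) :
    (∀ t : S, (fun j => Q t + Q (act j t)) ∈ QuadSet B) ∧
    (∀ (j : J) (t : S) (x : J),
      Q (act j t) + Q (act x (act j t)) = (Q t + Q (act x t)) + B j x) ∧
    Function.Injective (fun t : S => fun j => Q t + Q (act j t)) ∧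
    (∀ p ∈ QuadSet B, ∃ t : S, (fun j => Q t + Q (act j t)) = p) := by
  have h2z : (2 : ZMod 2) = 0 := rfl
  have h4z : (4 : ZMod 2) = 0 := rfl
  obtain ⟨hBl, hBr, hBalt, hBnd⟩ := hB
  have h1 : ∀ t : S, (fun j => Q t + Q (act j t)) ∈ QuadSet B := by
    intro t x y
    linear_combination (norm := (ring_nf; simp [h2z, h4z])) hQ t x y
  have h2 : ∀ (j : J) (t : S) (x : J),
      Q (act j t) + Q (act x (act j t)) = (Q t + Q (act x t)) + B j x := by
    intro j t x
    rw [← hactadd]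
    rw [show x + j = j + x from add_comm x j]
    linear_combination (norm := (ring_nf; simp [h2z, h4z])) hQ t j x
  refine ⟨h1, h2, ?_, ?_⟩
  · intro t t' h
    obtain ⟨j, hj, -⟩ := htrans t t'
    have hj0 : j = 0 := by
      apply hBnd
      intro x
      have h3 := h2 j t x
      rw [hj] at h3
      have hx : Q t + Q (act x t) = Q t' + Q (act x t') := congrFun h x
      linear_combination (norm := (ring_nf; simp [h2z, h4z])) h3 - hx
    rw [← hj, hj0, hact0]
  · intro p hp
    obtain ⟨t₀⟩ := ‹Nonempty S›
    set f : J → ZMod 2 := fun x => p x + (Q t₀ + Q (act x t₀)) with hf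
    have hadd : ∀ x y, f (x + y) = f x + f y := by
      intro x y
      have h1' := hp x y
      have h2' := h1 t₀ x y
      simp only [hf]
      linear_combination (norm := (ring_nf; simp [h2z, h4z])) h1' + h2'
    let fL : J →ₗ[ZMod 2] ZMod 2 :=
      (AddMonoidHom.mk' f hadd).toZModLinearMap 2
    let ψ : J → (J →ₗ[ZMod 2] ZMod 2) := fun j =>
      (AddMonoidHom.mk' (B j) (fun y z => hBr j y z)).toZModLinearMap 2
    have hψadd : ∀ j k, ψ (j + k) = ψ j + ψ k := by
      intro j k
      ext y
      exact hBl j k y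
    let φ : J →ₗ[ZMod 2] (J →ₗ[ZMod 2] ZMod 2) :=
      (AddMonoidHom.mk' ψ hψadd).toZModLinearMap 2
    have hφinj : Function.Injective φ := by
      rw [← LinearMap.ker_eq_bot, LinearMap.ker_eq_bot']
      intro m hm
      apply hBnd
      intro y
      exact LinearMap.congr_fun hm y
    have hφsurj : Function.Surjective φ :=
      (LinearMap.injective_iff_surjective_of_finrank_eq_finrank
        Subspace.dual_finrank_eq.symm).mp hφinj
    obtain ⟨j, hj⟩ := hφsurj fL
    refine ⟨act j t₀, ?_⟩
    funext x
    have hBx : B j x = f x := LinearMap.congr_fun hj x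
    have h3 := h2 j t₀ x
    rw [h3, hBx]
    simp only [hf]
    linear_combination (norm := (ring_nf; simp [h2z, h4z]))
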